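/- Let q be a perfect square with integer square root s, and let a satisfy a^{s+1} + a + 1 = 0. Then a(a+1)(a^{qs + s + 1} + a^{q+1} + a^s) = -(a² + a + 1)², where q = s². In particular a^{qs+s+1} + a^{q+1} + a^s = 0 if and only if a² + a + 1 = 0. -/
import Mathlib


/-- With q = s² and a^{s+1}+a+1 = 0 in the algebraic closure of F_s,
a(a+1)(a^{qs+s+1} + a^{q+1} + a^s) = -(a²+a+1)²; in particular
a^{qs+s+1} + a^{q+1} + a^s = 0 iff a²+a+1 = 0. -/
theorem stmt8 {K : Type*} [Field K] [IsAlgClosed K] (p n s q : ℕ)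
    (hp : p.Prime) [CharP K p] (hs : s = p ^ n) (hn : 0 < n) (hq : q = s ^ 2)
    (a : K) (ha : a ^ (s + 1) + a + 1 = 0) :
    a * (a + 1) * (a ^ (q * s + s + 1) + a ^ (q + 1) + a ^ s)
        = -(a ^ 2 + a + 1) ^ 2 ∧
      (a ^ (q * s + s + 1) + a ^ (q + 1) + a ^ s = 0 ↔ a ^ 2 + a + 1 = 0) := by
  haveI : Fact p.Prime := ⟨hp⟩
  have hs0 : s ≠ 0 := by
    rw [hs]; exact pow_ne_zero _ hp.pos.ne'
  have frob : ∀ x y : K, (x + y) ^ s = x ^ s + y ^ s := by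
    subst hs; exact fun x y => add_pow_char_pow x y p n
  have ha0 : a ≠ 0 := by
    rintro rfl
    simp [zero_pow hs0] at ha
  have ha1 : a + 1 ≠ 0 := by
    intro h
    have hA : a = -1 := by linear_combination h
    rw [hA] at ha
    have : ((-1 : K)) ^ (s + 1) = 0 := by linear_combination ha
    exact pow_ne_zero _ (neg_ne_zero.mpr (one_ne_zero)) this
  -- Frobenius applied once and twice
  have E2 : (a ^ s) ^ (s + 1) + a ^ s + 1 = 0 := by
    have h : (a ^ (s + 1) + a + 1) ^ s = 0 := by rw [ha, zero_pow hs0]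
    rw [frob, frob, one_pow, ← pow_mul, Nat.mul_comm, pow_mul] at h
    exact h
  have E3 : ((a ^ s) ^ s) ^ (s + 1) + (a ^ s) ^ s + 1 = 0 := by
    have h : ((a ^ s) ^ (s + 1) + a ^ s + 1) ^ s = 0 := by rw [E2, zero_pow hs0]
    rw [frob, frob, one_pow, ← pow_mul, Nat.mul_comm, pow_mul] at h
    exact h
  have hb : a * a ^ s = -(a + 1) := by linear_combination ha
  have hc : a ^ s * (a ^ s) ^ s = -(a ^ s + 1) := by linear_combination E2
  have hd : (a ^ s) ^ s * ((a ^ s) ^ s) ^ s = -((a ^ s) ^ s + 1) := by linear_combination E3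
  have habc : a * a ^ s * (a ^ s) ^ s = 1 := by linear_combination a * hc - hb
  have hbcd : a ^ s * (a ^ s) ^ s * ((a ^ s) ^ s) ^ s = 1 := by
    linear_combination a ^ s * hd - hc
  have hne : a ^ s * (a ^ s) ^ s ≠ 0 :=
    mul_ne_zero (pow_ne_zero _ ha0) (pow_ne_zero _ (pow_ne_zero _ ha0))
  have hdeq : ((a ^ s) ^ s) ^ s = a :=
    mul_right_cancel₀ hne (by linear_combination hbcd - habc)
  have hcc : (a ^ s) ^ s * (a + 1) = -1 := by
    linear_combination (a ^ s) ^ s * hb - habc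
  -- rewrite the goal exponents
  have hq1 : a ^ (q + 1) = (a ^ s) ^ s * a := by
    rw [pow_succ, hq, sq, pow_mul]
  have hqs : a ^ (q * s + s + 1) = a * a ^ s * a := by
    rw [pow_succ, pow_add, hq, sq, pow_mul, pow_mul, hdeq]
  have key : a * (a + 1) * (a ^ (q * s + s + 1) + a ^ (q + 1) + a ^ s)
      = -(a ^ 2 + a + 1) ^ 2 := by
    rw [hq1, hqs]
    linear_combination ((a ^ 2 + 1) * (a + 1)) * hb + a ^ 2 * hcc
  refine ⟨key, ?_, ?_⟩
  · intro h
    rw [h, mul_zero] at key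
    have := pow_eq_zero_iff (n := 2) (by norm_num) |>.mp (neg_eq_zero.mp key.symm)
    exact this
  · intro h
    have : a * (a + 1) * (a ^ (q * s + s + 1) + a ^ (q + 1) + a ^ s) = 0 := by
      rw [key, h]; ring
    rcases mul_eq_zero.mp this with h' | h'
    · exact absurd h' (mul_ne_zero ha0 ha1)
    · exact h'
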